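/- For every pair of infinite-dimensional real Banach spaces Y and X, one has K(Y) · J_s(X) ≤ 2 · e_1^s(Y, X). -/

import Mathlib

/-- The (Chebyshev) radius of a subset of a normed space:
`r(A) = inf_{b ∈ X} sup_{a ∈ A} ‖a − b‖`. -/
noncomputable def radius {X : Type} [SeminormedAddCommGroup X] (A : Set X) : ℝ :=
  ⨅ b : X, ⨆ a : A, ‖(a : X) - b‖

/-- The separable Jung constant
`J_s(X) = sup {2 r(A)/δ(A) : A closed, bounded, separable, δ(A) > 0}`. -/
noncomputable def JungS (X : Type) [SeminormedAddCommGroup X] : ℝ :=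
  sSup {c : ℝ | ∃ A : Set X, IsClosed A ∧ Bornology.IsBounded A ∧
    TopologicalSpace.IsSeparable A ∧ 0 < Metric.diam A ∧
    c = 2 * radius A / Metric.diam A}

/-- The Kottman constant: the supremum of separation constants of sequences in the
closed unit ball. -/
noncomputable def Kottman (Y : Type) [SeminormedAddCommGroup Y] : ℝ :=
  sSup {c : ℝ | ∃ y : ℕ → Y, (∀ n, ‖y n‖ ≤ 1) ∧
    c = sInf {d : ℝ | ∃ n m : ℕ, n ≠ m ∧ d = ‖y n - y m‖}}

/-- `e₁ˢ(Y, X)`: the infimum of all `l > 0` such that every Lipschitz map from a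
separable subset `M ⊆ Y` into `X` extends to any one extra point with Lipschitz
constant multiplied by at most `l`. -/
noncomputable def e1s (Y X : Type) [SeminormedAddCommGroup Y] [SeminormedAddCommGroup X] : ℝ :=
  sInf {l : ℝ | 0 < l ∧ ∀ (M : Set Y), TopologicalSpace.IsSeparable M → ∀ (p : Y)
    (f : M → X) (K : NNReal), LipschitzWith K f →
    ∃ F : ↥(insert p M : Set Y) → X, LipschitzWith (l.toNNReal * K) F ∧
      ∀ (y : Y) (hy : y ∈ M), F ⟨y, Set.mem_insert_of_mem p hy⟩ = f ⟨y, hy⟩}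

open Set Metric Filter Topology

section aux
variable {Y X : Type} [NormedAddCommGroup Y] [NormedAddCommGroup X] [CompleteSpace X]

/-- One-point Lipschitz extension with constant multiplied by 3. -/
lemma onePointExt (M : Set Y) (p : Y) (f : ↥M → X) (K : NNReal) (hf : LipschitzWith K f) :
    ∃ F : ↥(insert p M : Set Y) → X, LipschitzWith (3 * K) F ∧
      ∀ (y : Y) (hy : y ∈ M), F ⟨y, Set.mem_insert_of_mem p hy⟩ = f ⟨y, hy⟩ := by
  have hfd : ∀ (a b : Y) (ha : a ∈ M) (hb : b ∈ M),
      dist (f ⟨a, ha⟩) (f ⟨b, hb⟩) ≤ (K : ℝ) * dist a b := by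
    intro a b ha hb
    have := hf.dist_le_mul ⟨a, ha⟩ ⟨b, hb⟩
    simpa [Subtype.dist_eq] using this
  by_cases hp : p ∈ M
  · refine ⟨fun x => f ⟨x.1, Or.elim x.2 (fun h => by rw [h]; exact hp) id⟩, ?_, ?_⟩
    · apply LipschitzWith.of_dist_le_mul
      intro x y
      refine le_trans (hfd _ _ _ _) ?_
      rw [Subtype.dist_eq]
      have : (K : ℝ) ≤ ((3 * K : NNReal) : ℝ) := by
        push_cast; nlinarith [K.coe_nonneg]
      exact mul_le_mul_of_nonneg_right this dist_nonneg
    · intro y hy; rfl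
  · by_cases hne : M.Nonempty
    · -- find b : X with dist b (f m) ≤ 3 K dist p m
      have hKey : ∃ b : X, ∀ (m : Y) (hm : m ∈ M),
          dist b (f ⟨m, hm⟩) ≤ 3 * (K : ℝ) * dist p m := by
        by_cases hd : 0 < infDist p M
        · obtain ⟨m₀, hm₀, hlt⟩ := (infDist_lt_iff hne).mp
            (show infDist p M < 2 * infDist p M by linarith)
          refine ⟨f ⟨m₀, hm₀⟩, fun m hm => ?_⟩
          have h1 : infDist p M ≤ dist p m := infDist_le_dist_of_mem hm
          have h2 := hfd m₀ m hm₀ hm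
          have h3 : dist m₀ m ≤ dist m₀ p + dist p m := dist_triangle _ _ _
          have h4 : dist m₀ p = dist p m₀ := dist_comm _ _
          nlinarith [K.coe_nonneg, dist_nonneg (x := p) (y := m)]
        · have hd0 : infDist p M = 0 := le_antisymm (not_lt.mp hd) infDist_nonneg
          have hchoice : ∀ k : ℕ, ∃ m ∈ M, dist p m < (1/2 : ℝ) ^ k := by
            intro k
            exact (infDist_lt_iff hne).mp (by rw [hd0]; positivity)
          choose m hm hmd using hchoice
          set u : ℕ → X := fun k => f ⟨m k, hm k⟩ with hu
          have hcau : CauchySeq u := by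
            apply cauchySeq_of_le_geometric (1/2 : ℝ) (2 * K) (by norm_num)
            intro k
            have h1 := hfd (m k) (m (k+1)) (hm k) (hm (k+1))
            have h2 : dist (m k) (m (k+1)) ≤ dist (m k) p + dist p (m (k+1)) :=
              dist_triangle _ _ _
            have h3 : dist (m k) p = dist p (m k) := dist_comm _ _
            have h4 := hmd k
            have h5 := hmd (k+1)
            have h6 : (1/2 : ℝ) ^ (k+1) ≤ (1/2 : ℝ) ^ k := by
              apply pow_le_pow_of_le_one <;> norm_num
            nlinarith [K.coe_nonneg, pow_nonneg (by norm_num : (0:ℝ) ≤ 1/2) k]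
          obtain ⟨b, hb⟩ := cauchySeq_tendsto_of_complete hcau
          refine ⟨b, fun m' hm' => ?_⟩
          have ht1 : Tendsto (fun k => dist (u k) (f ⟨m', hm'⟩)) atTop
              (𝓝 (dist b (f ⟨m', hm'⟩))) := hb.dist tendsto_const_nhds
          have ht2 : Tendsto (fun k => (K : ℝ) * ((1/2 : ℝ) ^ k + dist p m')) atTop
              (𝓝 ((K : ℝ) * (0 + dist p m'))) := by
            apply Tendsto.const_mul
            exact (tendsto_pow_atTop_nhds_zero_of_lt_one (by norm_num) (by norm_num)).add
              tendsto_const_nhds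
          have hle : ∀ k, dist (u k) (f ⟨m', hm'⟩) ≤ (K : ℝ) * ((1/2 : ℝ) ^ k + dist p m') := by
            intro k
            have h1 := hfd (m k) m' (hm k) hm'
            have h2 : dist (m k) m' ≤ dist (m k) p + dist p m' := dist_triangle _ _ _
            have h3 : dist (m k) p = dist p (m k) := dist_comm _ _
            have h4 := hmd k
            nlinarith [K.coe_nonneg]
          have := le_of_tendsto_of_tendsto' ht1 ht2 hle
          have h0 : (K : ℝ) * (0 + dist p m') ≤ 3 * (K : ℝ) * dist p m' := by
            nlinarith [K.coe_nonneg, dist_nonneg (x := p) (y := m')]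
          linarith
      obtain ⟨b, hb⟩ := hKey
      classical
      refine ⟨fun x => if h : (x : Y) ∈ M then f ⟨x.1, h⟩ else b, ?_, ?_⟩
      · apply LipschitzWith.of_dist_le_mul
        intro x y
        have hC : ((3 * K : NNReal) : ℝ) = 3 * (K : ℝ) := by push_cast; ring
        rw [Subtype.dist_eq, hC]
        by_cases hx : (x : Y) ∈ M <;> by_cases hy : (y : Y) ∈ M
        · simp only [dif_pos hx, dif_pos hy]
          refine le_trans (hfd _ _ _ _) ?_
          nlinarith [K.coe_nonneg, dist_nonneg (x := (x:Y)) (y := (y:Y))]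
        · have hyp : (y : Y) = p := by rcases y.2 with h | h; exacts [h, absurd h hy]
          simp only [dif_pos hx, dif_neg hy]
          rw [dist_comm, hyp, dist_comm (x:Y) p]
          exact hb _ hx
        · have hxp : (x : Y) = p := by rcases x.2 with h | h; exacts [h, absurd h hx]
          simp only [dif_neg hx, dif_pos hy]; rw [hxp]
          exact hb _ hy
        · have hxp : (x : Y) = p := by rcases x.2 with h | h; exacts [h, absurd h hx]
          have hyp : (y : Y) = p := by rcases y.2 with h | h; exacts [h, absurd h hy]
          simp only [dif_neg hx, dif_neg hy]
          simp only [dist_self]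
          positivity
      · intro y hy
        exact dif_pos hy
    · rw [not_nonempty_iff_eq_empty] at hne
      refine ⟨fun _ => 0, ?_, ?_⟩
      · apply LipschitzWith.of_dist_le_mul
        intro x y
        simp only [dist_self]
        positivity
      · intro y hy; rw [hne] at hy; exact absurd hy (Set.notMem_empty y)

end aux

/-- For infinite-dimensional Banach spaces `Y, X`: `K(Y)·J_s(X) ≤ 2·e₁ˢ(Y, X)`. -/
theorem kottman_mul_jungS_le_two_mul_e1s
    (Y X : Type) [NormedAddCommGroup Y] [NormedSpace ℝ Y] [CompleteSpace Y]
    [NormedAddCommGroup X] [NormedSpace ℝ X] [CompleteSpace X]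
    (hY : ¬ FiniteDimensional ℝ Y) (hX : ¬ FiniteDimensional ℝ X) :
    Kottman Y * JungS X ≤ 2 * e1s Y X := by
  classical
  unfold Kottman JungS e1s
  set S := {c : ℝ | ∃ y : ℕ → Y, (∀ n, ‖y n‖ ≤ 1) ∧
    c = sInf {d : ℝ | ∃ n m : ℕ, n ≠ m ∧ d = ‖y n - y m‖}} with hS
  set T := {c : ℝ | ∃ A : Set X, IsClosed A ∧ Bornology.IsBounded A ∧
    TopologicalSpace.IsSeparable A ∧ 0 < Metric.diam A ∧
    c = 2 * radius A / Metric.diam A} with hT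
  set L := {l : ℝ | 0 < l ∧ ∀ (M : Set Y), TopologicalSpace.IsSeparable M → ∀ (p : Y)
    (f : M → X) (K : NNReal), LipschitzWith K f →
    ∃ F : ↥(insert p M : Set Y) → X, LipschitzWith (l.toNNReal * K) F ∧
      ∀ (y : Y) (hy : y ∈ M), F ⟨y, Set.mem_insert_of_mem p hy⟩ = f ⟨y, hy⟩} with hLdef
  -- L is nonempty: 3 ∈ L
  have h3L : (3 : ℝ) ∈ L := by
    refine ⟨by norm_num, fun M hM p f K hf => ?_⟩
    obtain ⟨F, hF, hFe⟩ := onePointExt M p f K hf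
    refine ⟨F, ?_, hFe⟩
    have h3 : (3 : ℝ).toNNReal = 3 := by
      simp [Real.toNNReal_ofNat]
    rw [h3]
    exact hF
  have hLne : L.Nonempty := ⟨3, h3L⟩
  have hL0 : ∀ l ∈ L, (0:ℝ) ≤ l := fun l hl => hl.1.le
  have hInfL0 : 0 ≤ sInf L := Real.sInf_nonneg hL0
  -- key pointwise inequality
  have key : ∀ c ∈ S, ∀ j ∈ T, c * j ≤ 2 * sInf L := by
    rintro c ⟨y, hy, rfl⟩ j ⟨A, hAc, hAb, hAs, hAd, rfl⟩
    set D := {d : ℝ | ∃ n m : ℕ, n ≠ m ∧ d = ‖y n - y m‖} with hD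
    have hDbdd : BddBelow D := ⟨0, by rintro d ⟨n, m, hnm, rfl⟩; exact norm_nonneg _⟩
    have hDne : D.Nonempty := ⟨‖y 0 - y 1‖, 0, 1, by norm_num, rfl⟩
    have hc0 : 0 ≤ sInf D := Real.sInf_nonneg (by rintro d ⟨n, m, hnm, rfl⟩; exact norm_nonneg _)
    have hsep : ∀ n m : ℕ, n ≠ m → sInf D ≤ ‖y n - y m‖ := fun n m h =>
      csInf_le hDbdd ⟨n, m, h, rfl⟩
    set c := sInf D with hc
    -- radius is nonnegative
    have hrad0 : (0:ℝ) ≤ radius A := by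
      refine le_ciInf fun b => Real.iSup_nonneg fun a => norm_nonneg _
    have hj0 : 0 ≤ 2 * radius A / diam A := by positivity
    rcases eq_or_lt_of_le hc0 with h0 | hcpos
    · rw [← h0, zero_mul]; positivity
    · -- c > 0
      have hyinj : Function.Injective y := by
        intro n m hnm
        by_contra hne
        have := hsep n m hne
        rw [hnm, sub_self, norm_zero] at this
        exact absurd (lt_of_lt_of_le hcpos this) (lt_irrefl 0)
      -- dense sequence in A
      have hAne : A.Nonempty := by
        by_contra h
        rw [not_nonempty_iff_eq_empty] at h
        rw [h, Metric.diam_empty] at hAd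
        exact lt_irrefl 0 hAd
      obtain ⟨a₀, ha₀⟩ := hAne
      haveI : TopologicalSpace.SeparableSpace ↥A := hAs.separableSpace
      haveI : Nonempty ↥A := ⟨⟨a₀, ha₀⟩⟩
      obtain ⟨u, hu⟩ := TopologicalSpace.exists_dense_seq ↥A
      set a : ℕ → X := fun n => (u n : X) with ha
      have haA : ∀ n, a n ∈ A := fun n => (u n).2
      have hdense : A ⊆ closure (Set.range a) := by
        intro x hx
        have h1 : (⟨x, hx⟩ : ↥A) ∈ closure (Set.range u) := hu.closure_range ▸ Set.mem_univ _
        have h2 : x ∈ Subtype.val '' closure (Set.range u) := ⟨⟨x, hx⟩, h1, rfl⟩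
        have h3 := image_closure_subset_closure_image (f := (Subtype.val : ↥A → X)) continuous_subtype_val h2
        have h4 : Subtype.val '' Set.range u = Set.range a := by
          rw [← Set.range_comp]; rfl
        rwa [h4] at h3
      set M := Set.range y with hM
      have hMsep : TopologicalSpace.IsSeparable M := (Set.countable_range y).isSeparable
      set f : ↥M → X := fun x => a (Classical.choose x.2) with hfdef
      have hfy : ∀ n : ℕ, f ⟨y n, Set.mem_range_self n⟩ = a n := by
        intro n
        exact congrArg a (hyinj (Classical.choose_spec (Set.mem_range_self (f := y) n)))
      set K := Real.toNNReal (diam A / c) with hKdef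
      have hKc : (K : ℝ) = diam A / c := Real.coe_toNNReal _ (by positivity)
      have hf : LipschitzWith K f := by
        apply LipschitzWith.of_dist_le_mul
        intro x z
        rcases eq_or_ne x z with rfl | hxz
        · simp
        · set n := Classical.choose x.2 with hn
          set m := Classical.choose z.2 with hm
          have hxn : y n = (x : Y) := Classical.choose_spec x.2
          have hzm : y m = (z : Y) := Classical.choose_spec z.2
          have hnm : n ≠ m := by
            intro h
            apply hxz
            apply Subtype.ext
            rw [← hxn, ← hzm, h]
          have h1 : dist (a n) (a m) ≤ diam A := dist_le_diam_of_mem hAb (haA n) (haA m)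
          have h2 : c ≤ dist (x : Y) (z : Y) := by
            rw [dist_eq_norm, ← hxn, ← hzm]
            exact hsep n m hnm
          have h3 : dist (x : Y) (z : Y) = dist ((x : Y)) ((z : Y)) := rfl
          show dist (a n) (a m) ≤ (K : ℝ) * dist x z
          rw [Subtype.dist_eq, hKc]
          have h4 : diam A / c * c ≤ diam A / c * dist (x:Y) (z:Y) := by
            apply mul_le_mul_of_nonneg_left h2
            positivity
          rw [div_mul_cancel₀] at h4
          · linarith
          · exact ne_of_gt hcpos
      -- bound each l ∈ L
      have hlow : ∀ l ∈ L, c * (2 * radius A / diam A) / 2 ≤ l := by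
        intro l hl
        obtain ⟨hl0, hext⟩ := hl
        obtain ⟨F, hF, hFeq⟩ := hext M hMsep 0 f K hf
        set b := F ⟨0, Set.mem_insert 0 M⟩ with hb
        have hcoe : ((Real.toNNReal l * K : NNReal) : ℝ) = l * (diam A / c) := by
          push_cast
          rw [Real.coe_toNNReal _ hl0.le, hKc]
        have hbound : ∀ n : ℕ, dist (a n) b ≤ l * (diam A / c) := by
          intro n
          have h1 := hF.dist_le_mul ⟨y n, Set.mem_insert_of_mem _ (Set.mem_range_self n)⟩
            ⟨0, Set.mem_insert 0 M⟩
          rw [Subtype.dist_eq, hcoe] at h1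
          simp only [hFeq (y n) (Set.mem_range_self n), hfy n] at h1
          have h2 : dist (y n) (0 : Y) = ‖y n‖ := by
            rw [dist_eq_norm, sub_zero]
          rw [h2] at h1
          calc dist (a n) b ≤ l * (diam A / c) * ‖y n‖ := h1
            _ ≤ l * (diam A / c) * 1 := by
                apply mul_le_mul_of_nonneg_left (hy n)
                positivity
            _ = l * (diam A / c) := mul_one _
        have hAball : ∀ x ∈ A, dist x b ≤ l * (diam A / c) := by
          intro x hx
          have hcl : closure (Set.range a) ⊆ {z : X | dist z b ≤ l * (diam A / c)} := by
            apply closure_minimal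
            · rintro z ⟨n, rfl⟩; exact hbound n
            · exact isClosed_le (Continuous.dist continuous_id continuous_const)
                continuous_const
          exact hcl (hdense hx)
        have hrads : radius A ≤ l * (diam A / c) := by
          unfold radius
          refine ciInf_le_of_le ⟨0, ?_⟩ b ?_
          · rintro r ⟨b', rfl⟩
            exact Real.iSup_nonneg fun x => norm_nonneg _
          · refine Real.iSup_le (fun x => ?_) (by positivity)
            rw [← dist_eq_norm]
            exact hAball x.1 x.2
        -- conclude
        have hfin : c * (2 * radius A / diam A) ≤ 2 * l := by
          have h5 : 2 * radius A / diam A ≤ 2 * (l * (diam A / c)) / diam A := by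
            gcongr
          have h6 : c * (2 * (l * (diam A / c)) / diam A) = 2 * l := by
            field_simp
          calc c * (2 * radius A / diam A) ≤ c * (2 * (l * (diam A / c)) / diam A) := by
                apply mul_le_mul_of_nonneg_left h5 hcpos.le
            _ = 2 * l := h6
        linarith
      have := le_csInf hLne hlow
      linarith
  -- S and T properties
  have hSne : (0:ℝ) ∈ S := by
    refine ⟨fun _ => 0, fun n => by simp, ?_⟩
    have : {d : ℝ | ∃ n m : ℕ, n ≠ m ∧ d = ‖(0:Y) - 0‖} = {0} := by
      ext d
      simp only [Set.mem_setOf_eq, Set.mem_singleton_iff, sub_self, norm_zero]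
      constructor
      · rintro ⟨n, m, _, rfl⟩; rfl
      · rintro rfl; exact ⟨0, 1, by norm_num, rfl⟩
    rw [this, csInf_singleton]
  have hSbdd : BddAbove S := by
    refine ⟨2, ?_⟩
    rintro c ⟨y, hy, rfl⟩
    refine le_trans (csInf_le ⟨0, by rintro d ⟨n, m, hnm, rfl⟩; exact norm_nonneg _⟩
      ⟨0, 1, by norm_num, rfl⟩) ?_
    calc ‖y 0 - y 1‖ ≤ ‖y 0‖ + ‖y 1‖ := norm_sub_le _ _
      _ ≤ 1 + 1 := add_le_add (hy 0) (hy 1)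
      _ = 2 := by norm_num
  -- T nonempty
  have hXnt : ∃ x : X, x ≠ 0 := by
    by_contra h
    push_neg at h
    haveI : Subsingleton X := ⟨fun a b => by rw [h a, h b]⟩
    have : FiniteDimensional ℝ X :=
      ⟨by rw [Subsingleton.elim (⊤ : Submodule ℝ X) ⊥]; exact Submodule.fg_bot⟩
    exact hX this
  obtain ⟨x₀, hx₀⟩ := hXnt
  have hTne : T.Nonempty := by
    refine ⟨2 * radius {0, x₀} / diam {0, x₀}, {0, x₀}, ?_, ?_, ?_, ?_, rfl⟩
    · exact ((Set.finite_singleton x₀).insert 0).isClosed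
    · exact ((Set.finite_singleton x₀).insert 0).isBounded
    · exact ((Set.countable_singleton x₀).insert 0).isSeparable
    · rw [Metric.diam_pair]
      rw [dist_eq_norm, zero_sub, norm_neg]
      exact norm_pos_iff.mpr hx₀
  have hT0 : ∀ j ∈ T, (0:ℝ) ≤ j := by
    rintro j ⟨A, hAc, hAb, hAs, hAd, rfl⟩
    have hrad0 : (0:ℝ) ≤ radius A :=
      le_ciInf fun b => Real.iSup_nonneg fun a => norm_nonneg _
    positivity
  have hTbdd : BddAbove T := by
    refine ⟨2, ?_⟩
    rintro j ⟨A, hAc, hAb, hAs, hAd, rfl⟩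
    have hAne : A.Nonempty := by
      by_contra h
      rw [not_nonempty_iff_eq_empty] at h
      rw [h, Metric.diam_empty] at hAd
      exact lt_irrefl 0 hAd
    obtain ⟨a₀, ha₀⟩ := hAne
    have hr : radius A ≤ diam A := by
      unfold radius
      refine ciInf_le_of_le ⟨0, ?_⟩ a₀ ?_
      · rintro r ⟨b', rfl⟩
        exact Real.iSup_nonneg fun x => norm_nonneg _
      · refine Real.iSup_le (fun x => ?_) diam_nonneg
        rw [← dist_eq_norm]
        exact dist_le_diam_of_mem hAb x.2 ha₀
    rw [div_le_iff₀ hAd]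
    linarith
  -- combine
  have hSup0 : 0 ≤ sSup S := le_csSup hSbdd hSne
  have hTSup0 : 0 ≤ sSup T := le_trans (hT0 _ hTne.some_mem) (le_csSup hTbdd hTne.some_mem)
  have hstep : ∀ j ∈ T, sSup S * j ≤ 2 * sInf L := by
    intro j hj
    rcases le_or_gt j 0 with hj0 | hj0
    · calc sSup S * j ≤ sSup S * 0 := mul_le_mul_of_nonneg_left hj0 hSup0
        _ = 0 := mul_zero _
        _ ≤ 2 * sInf L := by linarith
    · have : sSup S ≤ 2 * sInf L / j := by
        apply csSup_le ⟨0, hSne⟩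
        intro c hc
        rw [le_div_iff₀ hj0]
        exact key c hc j hj
      calc sSup S * j ≤ (2 * sInf L / j) * j := mul_le_mul_of_nonneg_right this hj0.le
        _ = 2 * sInf L := by field_simp
  rcases eq_or_lt_of_le hSup0 with h0 | hpos
  · rw [← h0, zero_mul]; linarith
  · have h7 : sSup T ≤ 2 * sInf L / sSup S := by
      apply csSup_le hTne
      intro j hj
      rw [le_div_iff₀ hpos]
      calc j * sSup S = sSup S * j := mul_comm _ _
        _ ≤ 2 * sInf L := hstep j hj
    calc sSup S * sSup T ≤ sSup S * (2 * sInf L / sSup S) :=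
          mul_le_mul_of_nonneg_left h7 hSup0
      _ = 2 * sInf L := by
          rw [mul_comm, div_mul_cancel₀ _ hpos.ne']
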